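/- Relation between the Target Score Matching and Denoising Score Matching losses: for any measurable vector field s : ℝ^d → ℝ^d, ∬ ‖s(y) − ∇ log p_X(x)‖² p_X(x) p_W(y − x) dx dy = ∬ ‖s(y) − ∇ log p_W(y − x)‖² p_X(x) p_W(y − x) dx dy + ∫ ‖∇ log p_X(x)‖² p_X(x) dx − ∬ ‖∇ log p_W(y − x)‖² p_X(x) p_W(y − x) dx dy, provided all four integrals are finite. -/

import Mathlib

open MeasureTheory Real Filter

section Aux

variable {d : ℕ}

local notation "E" d => EuclideanSpace ℝ (Fin d)

lemma aux_integral_gradient_eq_zero {f : EuclideanSpace ℝ (Fin d) → ℝ}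
    (hdiff : Differentiable ℝ f) (hint : Integrable f)
    (hgrad : Integrable (fun x => gradient f x)) :
    ∫ x, gradient f x = 0 := by
  have hfd : ∀ (v x : EuclideanSpace ℝ (Fin d)),
      (inner ℝ (gradient f x) v : ℝ) = fderiv ℝ f x v := by
    intro v x
    rw [gradient]
    exact InnerProductSpace.toDual_symm_apply
  have hint_v : ∀ v : EuclideanSpace ℝ (Fin d), Integrable (fun x => fderiv ℝ f x v) := by
    intro v
    have : (fun x => fderiv ℝ f x v) = fun x => (inner ℝ (gradient f x) v : ℝ) :=
      funext fun x => (hfd v x).symm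
    rw [this]
    exact hgrad.inner_const v
  have hzero : ∀ v : EuclideanSpace ℝ (Fin d), ∫ x, fderiv ℝ f x v = 0 := by
    intro v
    have h1 : Integrable (fun x : EuclideanSpace ℝ (Fin d) =>
        fderiv ℝ (fun _ : EuclideanSpace ℝ (Fin d) => (1 : ℝ)) x v * f x) := by
      simpa [fderiv_const] using (integrable_zero (EuclideanSpace ℝ (Fin d)) ℝ volume)
    have h2 : Integrable (fun x : EuclideanSpace ℝ (Fin d) => (1 : ℝ) * fderiv ℝ f x v) := by
      simpa using hint_v v
    have h3 : Integrable (fun x : EuclideanSpace ℝ (Fin d) => (1 : ℝ) * f x) := by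
      simpa using hint
    have h := integral_mul_fderiv_eq_neg_fderiv_mul_of_integrable h1 h2 h3
      (fun x _ => differentiableAt_const (1 : ℝ)) (fun x _ => hdiff x)
    simpa [fderiv_const] using h
  refine ext_inner_right ℝ fun v => ?_
  rw [real_inner_comm, ← integral_inner hgrad v]
  rw [show (fun x => (inner ℝ v (gradient f x) : ℝ)) = fun x => fderiv ℝ f x v
    from funext fun x => by rw [real_inner_comm]; exact hfd v x]
  rw [hzero v]
  simp

end Aux

section Aux2

variable {d : ℕ}

lemma aux_hasGradientAt_log {f : EuclideanSpace ℝ (Fin d) → ℝ} {x : EuclideanSpace ℝ (Fin d)}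
    (hf : DifferentiableAt ℝ f x) (hfx : f x ≠ 0) :
    HasGradientAt (fun x' => Real.log (f x')) ((f x)⁻¹ • gradient f x) x := by
  have h2 : HasFDerivAt f
      (InnerProductSpace.toDual ℝ (EuclideanSpace ℝ (Fin d)) (gradient f x)) x :=
    hasGradientAt_iff_hasFDerivAt.1 hf.hasGradientAt
  have h3 := h2.log hfx
  rw [hasGradientAt_iff_hasFDerivAt]
  refine h3.congr_fderiv ?_
  ext v
  simp [InnerProductSpace.toDual_apply_apply, real_inner_smul_left]

lemma aux_hasGradientAt_prod {pX pW : EuclideanSpace ℝ (Fin d) → ℝ}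
    (hX : Differentiable ℝ pX) (hW : Differentiable ℝ pW)
    (y x : EuclideanSpace ℝ (Fin d)) :
    HasGradientAt (fun x' => pX x' * pW (y - x'))
      (pW (y - x) • gradient pX x - pX x • gradient pW (y - x)) x := by
  have hX' : HasFDerivAt pX
      (InnerProductSpace.toDual ℝ (EuclideanSpace ℝ (Fin d)) (gradient pX x)) x :=
    hasGradientAt_iff_hasFDerivAt.1 (hX x).hasGradientAt
  have hW' : HasFDerivAt pW
      (InnerProductSpace.toDual ℝ (EuclideanSpace ℝ (Fin d)) (gradient pW (y - x))) (y - x) :=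
    hasGradientAt_iff_hasFDerivAt.1 (hW (y - x)).hasGradientAt
  have hsub : HasFDerivAt (fun x' : EuclideanSpace ℝ (Fin d) => y - x')
      (-(ContinuousLinearMap.id ℝ (EuclideanSpace ℝ (Fin d)))) x := by
    exact (hasFDerivAt_id (𝕜 := ℝ) x).const_sub y
  have hcomp : HasFDerivAt (fun x' : EuclideanSpace ℝ (Fin d) => pW (y - x'))
      ((InnerProductSpace.toDual ℝ (EuclideanSpace ℝ (Fin d)) (gradient pW (y - x))).comp
        (-(ContinuousLinearMap.id ℝ (EuclideanSpace ℝ (Fin d))))) x :=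
    HasFDerivAt.comp x hW' hsub
  have hmul := hX'.mul hcomp
  rw [hasGradientAt_iff_hasFDerivAt]
  refine hmul.congr_fderiv ?_
  ext v
  simp [InnerProductSpace.toDual_apply_apply, inner_sub_left, real_inner_smul_left]
  ring

end Aux2

set_option maxHeartbeats 1600000 in
/-- **Relation between the TSM and DSM losses** -/
theorem tsm_eq_dsm_plus_fisher_difference
    (d : ℕ) (hd : 1 ≤ d)
    (pX pW : EuclideanSpace ℝ (Fin d) → ℝ)
    (hpX_pos : ∀ x, 0 < pX x) (hpW_pos : ∀ w, 0 < pW w)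
    (hpX_diff : ContDiff ℝ 1 pX) (hpW_diff : ContDiff ℝ 1 pW)
    (hpX_prob : ∫ x, pX x = 1) (hpW_prob : ∫ w, pW w = 1)
    (hInt : ∀ y, Integrable (fun x => pX x * pW (y - x)))
    (hIntGrad : ∀ y, Integrable (fun x => gradient (fun x' => pX x' * pW (y - x')) x))
    (s : EuclideanSpace ℝ (Fin d) → EuclideanSpace ℝ (Fin d))
    (hs : Measurable s)
    (hTSM : Integrable (fun p : EuclideanSpace ℝ (Fin d) × EuclideanSpace ℝ (Fin d) =>
      ‖s p.2 - gradient (fun x' => Real.log (pX x')) p.1‖ ^ 2 * (pX p.1 * pW (p.2 - p.1))))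
    (hDSM : Integrable (fun p : EuclideanSpace ℝ (Fin d) × EuclideanSpace ℝ (Fin d) =>
      ‖s p.2 - gradient (fun w => Real.log (pW w)) (p.2 - p.1)‖ ^ 2 * (pX p.1 * pW (p.2 - p.1))))
    (hFisherX : Integrable (fun x => ‖gradient (fun x' => Real.log (pX x')) x‖ ^ 2 * pX x))
    (hFisherW : Integrable (fun p : EuclideanSpace ℝ (Fin d) × EuclideanSpace ℝ (Fin d) =>
      ‖gradient (fun w => Real.log (pW w)) (p.2 - p.1)‖ ^ 2 * (pX p.1 * pW (p.2 - p.1)))) :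
    (∫ p : EuclideanSpace ℝ (Fin d) × EuclideanSpace ℝ (Fin d),
        ‖s p.2 - gradient (fun x' => Real.log (pX x')) p.1‖ ^ 2 * (pX p.1 * pW (p.2 - p.1)))
    = (∫ p : EuclideanSpace ℝ (Fin d) × EuclideanSpace ℝ (Fin d),
        ‖s p.2 - gradient (fun w => Real.log (pW w)) (p.2 - p.1)‖ ^ 2 * (pX p.1 * pW (p.2 - p.1)))
      + (∫ x, ‖gradient (fun x' => Real.log (pX x')) x‖ ^ 2 * pX x)
      - (∫ p : EuclideanSpace ℝ (Fin d) × EuclideanSpace ℝ (Fin d),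
        ‖gradient (fun w => Real.log (pW w)) (p.2 - p.1)‖ ^ 2 * (pX p.1 * pW (p.2 - p.1))) := by
  have hDpX : Differentiable ℝ pX := hpX_diff.differentiable one_ne_zero
  have hDpW : Differentiable ℝ pW := hpW_diff.differentiable one_ne_zero
  set gL : EuclideanSpace ℝ (Fin d) → EuclideanSpace ℝ (Fin d) :=
    gradient (fun x' => Real.log (pX x')) with hgL_def
  set hL : EuclideanSpace ℝ (Fin d) → EuclideanSpace ℝ (Fin d) :=
    gradient (fun w => Real.log (pW w)) with hhL_def
  have hgX : ∀ x, gL x = (pX x)⁻¹ • gradient pX x :=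
    fun x => (aux_hasGradientAt_log (hDpX x) (hpX_pos x).ne').gradient
  have hgW : ∀ w, hL w = (pW w)⁻¹ • gradient pW w :=
    fun w => (aux_hasGradientAt_log (hDpW w) (hpW_pos w).ne').gradient
  -- basic facts
  have intW : Integrable pW := by
    by_contra hc
    rw [integral_undef hc] at hpW_prob
    norm_num at hpW_prob
  have hcontpX : Continuous pX := hpX_diff.continuous
  have hcontpW : Continuous pW := hpW_diff.continuous
  have hcont_gradpX : Continuous (fun x => gradient pX x) := by
    have : (fun x => gradient pX x) = fun x =>
        (InnerProductSpace.toDual ℝ (EuclideanSpace ℝ (Fin d))).symm (fderiv ℝ pX x) := rfl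
    rw [this]
    exact (LinearIsometryEquiv.continuous _).comp (hpX_diff.continuous_fderiv one_ne_zero)
  have hcont_gradpW : Continuous (fun x => gradient pW x) := by
    have : (fun x => gradient pW x) = fun x =>
        (InnerProductSpace.toDual ℝ (EuclideanSpace ℝ (Fin d))).symm (fderiv ℝ pW x) := rfl
    rw [this]
    exact (LinearIsometryEquiv.continuous _).comp (hpW_diff.continuous_fderiv one_ne_zero)
  have hcont_gL : Continuous gL := by
    rw [show gL = fun x => (pX x)⁻¹ • gradient pX x from funext hgX]
    exact (hcontpX.inv₀ fun x => (hpX_pos x).ne').smul hcont_gradpX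
  have hcont_hL : Continuous hL := by
    rw [show hL = fun w => (pW w)⁻¹ • gradient pW w from funext hgW]
    exact (hcontpW.inv₀ fun w => (hpW_pos w).ne').smul hcont_gradpW
  have hPc : Continuous (fun p : EuclideanSpace ℝ (Fin d) × EuclideanSpace ℝ (Fin d) =>
      pX p.1 * pW (p.2 - p.1)) :=
    (hcontpX.comp continuous_fst).mul (hcontpW.comp (continuous_snd.sub continuous_fst))
  have hPnn : ∀ p : EuclideanSpace ℝ (Fin d) × EuclideanSpace ℝ (Fin d),
      0 ≤ pX p.1 * pW (p.2 - p.1) :=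
    fun p => mul_nonneg (hpX_pos p.1).le (hpW_pos (p.2 - p.1)).le
  -- joint integrability of the X-Fisher information term
  have hGXint : Integrable (fun p : EuclideanSpace ℝ (Fin d) × EuclideanSpace ℝ (Fin d) =>
      ‖gL p.1‖ ^ 2 * (pX p.1 * pW (p.2 - p.1))) := by
    rw [Measure.volume_eq_prod]
    refine (integrable_prod_iff ?_).2 ⟨?_, ?_⟩
    · exact (((hcont_gL.comp continuous_fst).norm.pow 2).mul hPc).aestronglyMeasurable
    · refine Eventually.of_forall fun x => ?_
      have h := (intW.comp_sub_right x).const_mul (‖gL x‖ ^ 2 * pX x)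
      simp_rw [mul_assoc] at h
      exact h
    · have heq : (fun x => ∫ y, ‖‖gL x‖ ^ 2 * (pX x * pW (y - x))‖)
          = fun x => ‖gL x‖ ^ 2 * pX x := by
        funext x
        have h1 : ∀ y : EuclideanSpace ℝ (Fin d),
            ‖‖gL x‖ ^ 2 * (pX x * pW (y - x))‖ = (‖gL x‖ ^ 2 * pX x) * pW (y - x) := by
          intro y
          rw [Real.norm_of_nonneg (mul_nonneg (sq_nonneg _)
            (mul_nonneg (hpX_pos x).le (hpW_pos (y - x)).le))]
          ring
        simp_rw [h1]
        rw [integral_const_mul, integral_sub_right_eq_self pW x, hpW_prob, mul_one]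
      rw [heq]
      exact hFisherX
  -- value of the joint X-Fisher integral
  have hGXval : (∫ p : EuclideanSpace ℝ (Fin d) × EuclideanSpace ℝ (Fin d),
      ‖gL p.1‖ ^ 2 * (pX p.1 * pW (p.2 - p.1))) = ∫ x, ‖gL x‖ ^ 2 * pX x := by
    have hGXint' := hGXint
    rw [Measure.volume_eq_prod] at hGXint'
    rw [Measure.volume_eq_prod, integral_prod _ hGXint']
    have hin : ∀ x : EuclideanSpace ℝ (Fin d),
        ∫ y, ‖gL x‖ ^ 2 * (pX x * pW (y - x)) = ‖gL x‖ ^ 2 * pX x := by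
      intro x
      simp_rw [show ∀ y : EuclideanSpace ℝ (Fin d),
        ‖gL x‖ ^ 2 * (pX x * pW (y - x)) = (‖gL x‖ ^ 2 * pX x) * pW (y - x) from fun y => by ring]
      rw [integral_const_mul, integral_sub_right_eq_self pW x, hpW_prob, mul_one]
    simp_rw [hin]
  -- integrability of the ‖s‖² term
  have hSint : Integrable (fun p : EuclideanSpace ℝ (Fin d) × EuclideanSpace ℝ (Fin d) =>
      ‖s p.2‖ ^ 2 * (pX p.1 * pW (p.2 - p.1))) := by
    refine Integrable.mono' ((hTSM.const_mul 2).add (hGXint.const_mul 2))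
      ((((hs.comp measurable_snd).norm.pow_const 2).mul hPc.measurable).aestronglyMeasurable)
      (Eventually.of_forall fun p => ?_)
    rw [Real.norm_of_nonneg (mul_nonneg (sq_nonneg _) (hPnn p))]
    simp only [Pi.add_apply]
    have htri : ‖s p.2‖ ≤ ‖s p.2 - gL p.1‖ + ‖gL p.1‖ := by
      simpa using norm_add_le (s p.2 - gL p.1) (gL p.1)
    have hP0 := hPnn p
    have key : ‖s p.2‖ ^ 2 ≤ 2 * ‖s p.2 - gL p.1‖ ^ 2 + 2 * ‖gL p.1‖ ^ 2 := by
      nlinarith [mul_self_le_mul_self (norm_nonneg (s p.2)) htri,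
        sq_nonneg (‖s p.2 - gL p.1‖ - ‖gL p.1‖), norm_nonneg (s p.2)]
    nlinarith [mul_le_mul_of_nonneg_right key hP0]
  -- integrability of the cross terms
  have hAint : Integrable (fun p : EuclideanSpace ℝ (Fin d) × EuclideanSpace ℝ (Fin d) =>
      (inner ℝ (s p.2) (gL p.1) : ℝ) * (pX p.1 * pW (p.2 - p.1))) := by
    refine Integrable.mono' ((hSint.add hGXint).const_mul 2⁻¹)
      ((((hs.comp measurable_snd).inner (hcont_gL.measurable.comp measurable_fst)).mul
        hPc.measurable).aestronglyMeasurable)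
      (Eventually.of_forall fun p => ?_)
    rw [norm_mul, Real.norm_of_nonneg (hPnn p), Real.norm_eq_abs]
    simp only [Pi.add_apply]
    have h1 := abs_real_inner_le_norm (s p.2) (gL p.1)
    have hP0 := hPnn p
    have h2 := abs_nonneg ((inner ℝ (s p.2) (gL p.1) : ℝ))
    have key : |(inner ℝ (s p.2) (gL p.1) : ℝ)| ≤ 2⁻¹ * (‖s p.2‖ ^ 2 + ‖gL p.1‖ ^ 2) := by
      nlinarith [sq_nonneg (‖s p.2‖ - ‖gL p.1‖), norm_nonneg (s p.2), norm_nonneg (gL p.1)]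
    nlinarith [mul_le_mul_of_nonneg_right key hP0]
  have hBint : Integrable (fun p : EuclideanSpace ℝ (Fin d) × EuclideanSpace ℝ (Fin d) =>
      (inner ℝ (s p.2) (hL (p.2 - p.1)) : ℝ) * (pX p.1 * pW (p.2 - p.1))) := by
    refine Integrable.mono' ((hSint.add hFisherW).const_mul 2⁻¹)
      ((((hs.comp measurable_snd).inner
          (hcont_hL.measurable.comp (measurable_snd.sub measurable_fst))).mul
        hPc.measurable).aestronglyMeasurable)
      (Eventually.of_forall fun p => ?_)
    rw [norm_mul, Real.norm_of_nonneg (hPnn p), Real.norm_eq_abs]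
    simp only [Pi.add_apply]
    have h1 := abs_real_inner_le_norm (s p.2) (hL (p.2 - p.1))
    have hP0 := hPnn p
    have h2 := abs_nonneg ((inner ℝ (s p.2) (hL (p.2 - p.1)) : ℝ))
    have key : |(inner ℝ (s p.2) (hL (p.2 - p.1)) : ℝ)|
        ≤ 2⁻¹ * (‖s p.2‖ ^ 2 + ‖hL (p.2 - p.1)‖ ^ 2) := by
      nlinarith [sq_nonneg (‖s p.2‖ - ‖hL (p.2 - p.1)‖), norm_nonneg (s p.2),
        norm_nonneg (hL (p.2 - p.1))]
    nlinarith [mul_le_mul_of_nonneg_right key hP0]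
  -- the key pointwise identity for the gradient of the joint density
  have hgradprod : ∀ y x : EuclideanSpace ℝ (Fin d),
      gradient (fun x' => pX x' * pW (y - x')) x
        = (pX x * pW (y - x)) • (gL x - hL (y - x)) := by
    intro y x
    rw [(aux_hasGradientAt_prod hDpX hDpW y x).gradient, hgX x, hgW (y - x), smul_sub,
      smul_smul, smul_smul]
    have e1 : pX x * pW (y - x) * (pX x)⁻¹ = pW (y - x) := by
      rw [mul_comm (pX x), mul_assoc, mul_inv_cancel₀ (hpX_pos x).ne', mul_one]
    have e2 : pX x * pW (y - x) * (pW (y - x))⁻¹ = pX x := by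
      rw [mul_assoc, mul_inv_cancel₀ (hpW_pos (y - x)).ne', mul_one]
    rw [e1, e2]
  -- the difference of cross terms as an inner product with the gradient of the joint density
  have heqΦ : (fun p : EuclideanSpace ℝ (Fin d) × EuclideanSpace ℝ (Fin d) =>
        (inner ℝ (s p.2) (gradient (fun x' => pX x' * pW (p.2 - x')) p.1) : ℝ))
      = fun p => (inner ℝ (s p.2) (gL p.1) : ℝ) * (pX p.1 * pW (p.2 - p.1))
          - (inner ℝ (s p.2) (hL (p.2 - p.1)) : ℝ) * (pX p.1 * pW (p.2 - p.1)) := by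
    funext p
    rw [hgradprod p.2 p.1, real_inner_smul_right, inner_sub_right]
    ring
  have hΦint : Integrable (fun p : EuclideanSpace ℝ (Fin d) × EuclideanSpace ℝ (Fin d) =>
      (inner ℝ (s p.2) (gradient (fun x' => pX x' * pW (p.2 - x')) p.1) : ℝ)) := by
    rw [heqΦ]
    exact hAint.sub hBint
  have hΦzero : (∫ p : EuclideanSpace ℝ (Fin d) × EuclideanSpace ℝ (Fin d),
      (inner ℝ (s p.2) (gradient (fun x' => pX x' * pW (p.2 - x')) p.1) : ℝ)) = 0 := by
    rw [Measure.volume_eq_prod] at hΦint ⊢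
    rw [integral_prod_symm _ hΦint]
    have hin : ∀ y : EuclideanSpace ℝ (Fin d),
        ∫ x, (inner ℝ (s y) (gradient (fun x' => pX x' * pW (y - x')) x) : ℝ) = 0 := by
      intro y
      have hdq : Differentiable ℝ (fun x' => pX x' * pW (y - x')) :=
        hDpX.mul (hDpW.comp ((differentiable_const y).sub differentiable_id))
      rw [integral_inner (hIntGrad y) (s y),
        aux_integral_gradient_eq_zero hdq (hInt y) (hIntGrad y)]
      simp
    simp_rw [hin]
    simp
  have hAB : (∫ p : EuclideanSpace ℝ (Fin d) × EuclideanSpace ℝ (Fin d),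
        (inner ℝ (s p.2) (gL p.1) : ℝ) * (pX p.1 * pW (p.2 - p.1)))
      = ∫ p : EuclideanSpace ℝ (Fin d) × EuclideanSpace ℝ (Fin d),
        (inner ℝ (s p.2) (hL (p.2 - p.1)) : ℝ) * (pX p.1 * pW (p.2 - p.1)) := by
    have h := integral_sub hAint hBint
    rw [← heqΦ] at h
    rw [hΦzero] at h
    linarith
  -- expansions of the TSM and DSM losses
  have hTSMexp : (∫ p : EuclideanSpace ℝ (Fin d) × EuclideanSpace ℝ (Fin d),
        ‖s p.2 - gL p.1‖ ^ 2 * (pX p.1 * pW (p.2 - p.1)))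
      = (∫ p : EuclideanSpace ℝ (Fin d) × EuclideanSpace ℝ (Fin d),
          ‖s p.2‖ ^ 2 * (pX p.1 * pW (p.2 - p.1)))
        - 2 * (∫ p : EuclideanSpace ℝ (Fin d) × EuclideanSpace ℝ (Fin d),
          (inner ℝ (s p.2) (gL p.1) : ℝ) * (pX p.1 * pW (p.2 - p.1)))
        + (∫ p : EuclideanSpace ℝ (Fin d) × EuclideanSpace ℝ (Fin d),
          ‖gL p.1‖ ^ 2 * (pX p.1 * pW (p.2 - p.1))) := by
    rw [show (fun p : EuclideanSpace ℝ (Fin d) × EuclideanSpace ℝ (Fin d) =>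
          ‖s p.2 - gL p.1‖ ^ 2 * (pX p.1 * pW (p.2 - p.1)))
        = fun p => (‖s p.2‖ ^ 2 * (pX p.1 * pW (p.2 - p.1))
            - 2 * ((inner ℝ (s p.2) (gL p.1) : ℝ) * (pX p.1 * pW (p.2 - p.1))))
            + ‖gL p.1‖ ^ 2 * (pX p.1 * pW (p.2 - p.1)) from funext fun p => by
          rw [norm_sub_sq_real]; ring]
    have hSA : Integrable (fun p : EuclideanSpace ℝ (Fin d) × EuclideanSpace ℝ (Fin d) =>
        ‖s p.2‖ ^ 2 * (pX p.1 * pW (p.2 - p.1))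
          - 2 * ((inner ℝ (s p.2) (gL p.1) : ℝ) * (pX p.1 * pW (p.2 - p.1)))) :=
      hSint.sub (hAint.const_mul 2)
    rw [integral_add hSA hGXint, integral_sub hSint (hAint.const_mul 2), integral_const_mul]
  have hDSMexp : (∫ p : EuclideanSpace ℝ (Fin d) × EuclideanSpace ℝ (Fin d),
        ‖s p.2 - hL (p.2 - p.1)‖ ^ 2 * (pX p.1 * pW (p.2 - p.1)))
      = (∫ p : EuclideanSpace ℝ (Fin d) × EuclideanSpace ℝ (Fin d),
          ‖s p.2‖ ^ 2 * (pX p.1 * pW (p.2 - p.1)))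
        - 2 * (∫ p : EuclideanSpace ℝ (Fin d) × EuclideanSpace ℝ (Fin d),
          (inner ℝ (s p.2) (hL (p.2 - p.1)) : ℝ) * (pX p.1 * pW (p.2 - p.1)))
        + (∫ p : EuclideanSpace ℝ (Fin d) × EuclideanSpace ℝ (Fin d),
          ‖hL (p.2 - p.1)‖ ^ 2 * (pX p.1 * pW (p.2 - p.1))) := by
    rw [show (fun p : EuclideanSpace ℝ (Fin d) × EuclideanSpace ℝ (Fin d) =>
          ‖s p.2 - hL (p.2 - p.1)‖ ^ 2 * (pX p.1 * pW (p.2 - p.1)))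
        = fun p => (‖s p.2‖ ^ 2 * (pX p.1 * pW (p.2 - p.1))
            - 2 * ((inner ℝ (s p.2) (hL (p.2 - p.1)) : ℝ) * (pX p.1 * pW (p.2 - p.1))))
            + ‖hL (p.2 - p.1)‖ ^ 2 * (pX p.1 * pW (p.2 - p.1)) from funext fun p => by
          rw [norm_sub_sq_real]; ring]
    have hSB : Integrable (fun p : EuclideanSpace ℝ (Fin d) × EuclideanSpace ℝ (Fin d) =>
        ‖s p.2‖ ^ 2 * (pX p.1 * pW (p.2 - p.1))
          - 2 * ((inner ℝ (s p.2) (hL (p.2 - p.1)) : ℝ) * (pX p.1 * pW (p.2 - p.1)))) :=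
      hSint.sub (hBint.const_mul 2)
    rw [integral_add hSB hFisherW, integral_sub hSint (hBint.const_mul 2), integral_const_mul]
  rw [hTSMexp, hDSMexp]
  linarith [hGXval, hAB]
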